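/- For the generalized bicycle code with H_X = (A|B) and H_Z = (Bᵀ|Aᵀ) where A, B are circulant ℓ×ℓ matrices over F_2 corresponding to polynomials a(x), b(x) ∈ F_2[x]/(x^ℓ-1), the rank of H_X equals ℓ - deg gcd(a(x), b(x), x^ℓ - 1). -/

import Mathlib

open Polynomial Matrix

namespace Stmt8

variable {ℓ : ℕ}

noncomputable section

abbrev F := ZMod 2

lemma f_monic (hℓ : 0 < ℓ) : (X ^ ℓ - 1 : F[X]).Monic := by
  have := Polynomial.monic_X_pow_sub_C (1 : F) hℓ.ne'
  simpa using this

lemma f_natDegree (hℓ : 0 < ℓ) : (X ^ ℓ - 1 : F[X]).natDegree = ℓ := by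
  simpa using (Polynomial.natDegree_X_pow_sub_C (n := ℓ) (r := (1 : F)))

lemma f_ne_zero (hℓ : 0 < ℓ) : (X ^ ℓ - 1 : F[X]) ≠ 0 := (f_monic hℓ).ne_zero

/-- basis of AdjoinRoot (X^ℓ-1) indexed by Fin ℓ -/
def B (hℓ : 0 < ℓ) : Module.Basis (Fin ℓ) F (AdjoinRoot (X ^ ℓ - 1 : F[X])) :=
  (AdjoinRoot.powerBasis (f_ne_zero hℓ)).basis.reindex
    (finCongr (f_natDegree hℓ))

lemma B_apply (hℓ : 0 < ℓ) (i : Fin ℓ) :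
    B hℓ i = AdjoinRoot.root (X ^ ℓ - 1 : F[X]) ^ (i : ℕ) := by
  rw [B, Module.Basis.reindex_apply, PowerBasis.basis_eq_pow, AdjoinRoot.powerBasis_gen]
  congr 1

lemma root_pow_self (hℓ : 0 < ℓ) : AdjoinRoot.root (X ^ ℓ - 1 : F[X]) ^ ℓ = 1 := by
  have h := AdjoinRoot.mk_self (f := (X ^ ℓ - 1 : F[X]))
  rw [map_sub, map_pow, AdjoinRoot.mk_X, _root_.map_one, sub_eq_zero] at h
  exact h

lemma root_pow_mod (hℓ : 0 < ℓ) (m : ℕ) :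
    AdjoinRoot.root (X ^ ℓ - 1 : F[X]) ^ m = AdjoinRoot.root (X ^ ℓ - 1 : F[X]) ^ (m % ℓ) := by
  conv_lhs => rw [← Nat.div_add_mod m ℓ]
  rw [pow_add, pow_mul, root_pow_self hℓ, one_pow, one_mul]

lemma mk_eq_sum (hℓ : 0 < ℓ) {p : F[X]} (hp : p.natDegree < ℓ) :
    AdjoinRoot.mk (X ^ ℓ - 1 : F[X]) p
      = ∑ i : Fin ℓ, p.coeff i • AdjoinRoot.root (X ^ ℓ - 1 : F[X]) ^ (i : ℕ) := by
  rw [Fin.sum_univ_eq_sum_range (fun i => p.coeff i • AdjoinRoot.root (X ^ ℓ - 1 : F[X]) ^ i)]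
  conv_lhs => rw [p.as_sum_range' ℓ hp]
  rw [map_sum]
  refine Finset.sum_congr rfl fun i _ => ?_
  rw [← C_mul_X_pow_eq_monomial, _root_.map_mul, map_pow, AdjoinRoot.mk_X, Algebra.smul_def]
  rfl


lemma mul_root_pow (hℓ : 0 < ℓ) {p : F[X]} (hp : p.natDegree < ℓ) (j : Fin ℓ) :
    AdjoinRoot.mk (X ^ ℓ - 1 : F[X]) p * AdjoinRoot.root (X ^ ℓ - 1 : F[X]) ^ (j : ℕ)
      = ∑ i : Fin ℓ, p.coeff ((i - j) : Fin ℓ).val • AdjoinRoot.root (X ^ ℓ - 1 : F[X]) ^ (i : ℕ) := by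
  haveI : NeZero ℓ := ⟨hℓ.ne'⟩
  rw [mk_eq_sum hℓ hp, Finset.sum_mul]
  refine Fintype.sum_equiv (Equiv.addRight j) _ _ fun k => ?_
  simp only [Equiv.coe_addRight, add_sub_cancel_right]
  rw [smul_mul_assoc, ← pow_add, root_pow_mod hℓ (k.val + j.val), ← Fin.val_add]

lemma circ_key (hℓ : 0 < ℓ) {p : F[X]} (hp : p.natDegree < ℓ) (v : Fin ℓ → F) :
    (B hℓ).equivFun.symm ((Matrix.circulant fun i : Fin ℓ => p.coeff i.val) *ᵥ v)
      = AdjoinRoot.mk (X ^ ℓ - 1 : F[X]) p * (B hℓ).equivFun.symm v := by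
  rw [Module.Basis.equivFun_symm_apply, Module.Basis.equivFun_symm_apply, Finset.mul_sum]
  simp_rw [B_apply, Matrix.mulVec, dotProduct, Matrix.circulant_apply, Finset.sum_smul]
  rw [Finset.sum_comm]
  refine Finset.sum_congr rfl fun j _ => ?_
  rw [mul_smul_comm, mul_root_pow hℓ hp j, Finset.smul_sum]
  refine Finset.sum_congr rfl fun i _ => ?_
  rw [mul_comm, mul_smul]


/-- the linear equivalence `(Fin ℓ → F) ≃ R` -/
def e (hℓ : 0 < ℓ) : (Fin ℓ → F) ≃ₗ[F] AdjoinRoot (X ^ ℓ - 1 : F[X]) :=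
  (B hℓ).equivFun.symm

lemma map_range_circ (hℓ : 0 < ℓ) {p : F[X]} (hp : p.natDegree < ℓ) :
    Submodule.map (e hℓ : (Fin ℓ → F) →ₗ[F] AdjoinRoot (X ^ ℓ - 1 : F[X]))
        (LinearMap.range (Matrix.mulVecLin (Matrix.circulant fun i : Fin ℓ => p.coeff i.val)))
      = (Ideal.span {AdjoinRoot.mk (X ^ ℓ - 1 : F[X]) p}).restrictScalars F := by
  ext z
  simp only [Submodule.mem_map, LinearMap.mem_range, Submodule.restrictScalars_mem,
    Ideal.mem_span_singleton', Matrix.mulVecLin_apply]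
  constructor
  · rintro ⟨y, ⟨v, rfl⟩, rfl⟩
    refine ⟨e hℓ v, ?_⟩
    rw [mul_comm]
    exact (circ_key hℓ hp v).symm
  · rintro ⟨c, rfl⟩
    refine ⟨_, ⟨(e hℓ).symm c, rfl⟩, ?_⟩
    calc (e hℓ) ((Matrix.circulant fun i : Fin ℓ => p.coeff i.val) *ᵥ (e hℓ).symm c)
        = AdjoinRoot.mk (X ^ ℓ - 1 : F[X]) p * (e hℓ) ((e hℓ).symm c) :=
          circ_key hℓ hp ((e hℓ).symm c)
      _ = c * AdjoinRoot.mk (X ^ ℓ - 1 : F[X]) p := by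
          rw [LinearEquiv.apply_symm_apply, mul_comm]

lemma range_fromColumns {m n₁ n₂ : Type*} [Fintype n₁] [Fintype n₂]
    (A : Matrix m n₁ F) (Bm : Matrix m n₂ F) :
    LinearMap.range (Matrix.mulVecLin (Matrix.fromCols A Bm))
      = LinearMap.range A.mulVecLin ⊔ LinearMap.range Bm.mulVecLin := by
  ext x
  simp only [LinearMap.mem_range, Submodule.mem_sup, Matrix.mulVecLin_apply]
  constructor
  · rintro ⟨u, rfl⟩
    refine ⟨A *ᵥ (u ∘ Sum.inl), ⟨_, rfl⟩, Bm *ᵥ (u ∘ Sum.inr), ⟨_, rfl⟩, ?_⟩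
    rw [← Matrix.fromCols_mulVec_sumElim]
    exact congrArg _ (Sum.elim_comp_inl_inr u)
  · rintro ⟨y, ⟨u, rfl⟩, z, ⟨w, rfl⟩, rfl⟩
    exact ⟨Sum.elim u w, Matrix.fromCols_mulVec_sumElim A Bm u w⟩

lemma restrictScalars_sup {A : Type*} [CommRing A] [Algebra F A] (I J : Ideal A) :
    (I ⊔ J).restrictScalars F = I.restrictScalars F ⊔ J.restrictScalars F := by
  ext x
  simp only [Submodule.restrictScalars_mem]
  rw [Submodule.mem_sup, Submodule.mem_sup]
  simp only [Submodule.restrictScalars_mem]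

lemma map_singleton (hℓ : 0 < ℓ) (p : F[X]) :
    Ideal.map (AdjoinRoot.mk (X ^ ℓ - 1 : F[X])) (Ideal.span {p})
      = Ideal.span {AdjoinRoot.mk (X ^ ℓ - 1 : F[X]) p} := by
  rw [Ideal.map_span, Set.image_singleton]

lemma span_pair_eq (hℓ : 0 < ℓ) (a b : F[X]) :
    Ideal.span {AdjoinRoot.mk (X ^ ℓ - 1 : F[X]) a}
        ⊔ Ideal.span {AdjoinRoot.mk (X ^ ℓ - 1 : F[X]) b}
      = Ideal.span {AdjoinRoot.mk (X ^ ℓ - 1 : F[X]) (gcd (gcd a b) (X ^ ℓ - 1))} := by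
  have h0 : Ideal.span {AdjoinRoot.mk (X ^ ℓ - 1 : F[X]) (X ^ ℓ - 1)} = ⊥ := by
    rw [AdjoinRoot.mk_self, Ideal.span_singleton_eq_bot]
  calc Ideal.span {AdjoinRoot.mk (X ^ ℓ - 1 : F[X]) a}
        ⊔ Ideal.span {AdjoinRoot.mk (X ^ ℓ - 1 : F[X]) b}
      = Ideal.span {AdjoinRoot.mk (X ^ ℓ - 1 : F[X]) a, AdjoinRoot.mk (X ^ ℓ - 1 : F[X]) b} := by
        rw [Ideal.span_insert]
    _ = Ideal.map (AdjoinRoot.mk (X ^ ℓ - 1 : F[X])) (Ideal.span {a, b}) := by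
        rw [Ideal.map_span, Set.image_insert_eq, Set.image_singleton]
    _ = Ideal.map (AdjoinRoot.mk (X ^ ℓ - 1 : F[X])) (Ideal.span {gcd a b}) := by
        rw [span_gcd]
    _ = Ideal.map (AdjoinRoot.mk (X ^ ℓ - 1 : F[X])) (Ideal.span {gcd a b, X ^ ℓ - 1}) := by
        rw [Ideal.map_span, Ideal.map_span, Set.image_insert_eq, Set.image_singleton,
          Set.image_singleton, Ideal.span_insert, h0, sup_bot_eq]
    _ = Ideal.map (AdjoinRoot.mk (X ^ ℓ - 1 : F[X]))
          (Ideal.span {gcd (gcd a b) (X ^ ℓ - 1)}) := by rw [span_gcd]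
    _ = Ideal.span {AdjoinRoot.mk (X ^ ℓ - 1 : F[X]) (gcd (gcd a b) (X ^ ℓ - 1))} :=
        map_singleton hℓ _

lemma finrank_ideal (hℓ : 0 < ℓ) {g : F[X]} (hg : g ∣ (X ^ ℓ - 1 : F[X])) :
    Module.finrank F ((Ideal.span {AdjoinRoot.mk (X ^ ℓ - 1 : F[X]) g}).restrictScalars F)
      = ℓ - g.natDegree := by
  have hg0 : g ≠ 0 := by
    rintro rfl
    exact f_ne_zero hℓ (zero_dvd_iff.mp hg)
  haveI : Module.Finite F (AdjoinRoot (X ^ ℓ - 1 : F[X])) := Module.Finite.of_basis (B hℓ)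
  set J : Ideal (AdjoinRoot (X ^ ℓ - 1 : F[X])) :=
    Ideal.span {AdjoinRoot.mk (X ^ ℓ - 1 : F[X]) g} with hJdef
  have hle : Ideal.span {(X ^ ℓ - 1 : F[X])} ≤ Ideal.span {g} :=
    Ideal.span_singleton_le_span_singleton.mpr hg
  have hJ : (Ideal.span {g}).map (Ideal.Quotient.mkₐ F (Ideal.span {(X ^ ℓ - 1 : F[X])})) = J := by
    rw [Ideal.map_span, Set.image_singleton]
    rfl
  have e2 : ((F[X] ⧸ Ideal.span {(X ^ ℓ - 1 : F[X])}) ⧸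
        (Ideal.span {g}).map (Ideal.Quotient.mkₐ F (Ideal.span {(X ^ ℓ - 1 : F[X])})))
      ≃ₐ[F] F[X] ⧸ Ideal.span {g} := DoubleQuot.quotQuotEquivQuotOfLEₐ F hle
  have e2 : (AdjoinRoot (X ^ ℓ - 1 : F[X]) ⧸ J) ≃ₐ[F] F[X] ⧸ Ideal.span {g} := by
    rw [← hJ]; exact e2
  have e1 := Submodule.Quotient.restrictScalarsEquiv F (J : Submodule (AdjoinRoot (X ^ ℓ - 1 : F[X])) (AdjoinRoot (X ^ ℓ - 1 : F[X])))
  have hq : Module.finrank F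
      ((AdjoinRoot (X ^ ℓ - 1 : F[X])) ⧸ (J.restrictScalars F)) = g.natDegree := by
    rw [(e1.trans e2.toLinearEquiv).finrank_eq]
    exact (AdjoinRoot.powerBasis hg0).finrank
  have h2 := Submodule.finrank_quotient_add_finrank (J.restrictScalars F)
  have h3 : Module.finrank F (AdjoinRoot (X ^ ℓ - 1 : F[X])) = ℓ := by
    rw [Module.finrank_eq_card_basis (B hℓ), Fintype.card_fin]
  omega

end
end Stmt8

/-- For a GB code with H_X = (A|B), A, B circulant from a(x), b(x),
rank H_X = ℓ - deg gcd(a, b, x^ℓ - 1). -/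
theorem stmt_8 (ℓ : ℕ) (hℓ : 0 < ℓ) (a b : Polynomial (ZMod 2))
    (ha : a.natDegree < ℓ) (hb : b.natDegree < ℓ) :
    (Matrix.fromCols
        (Matrix.circulant fun i : Fin ℓ => a.coeff i.val)
        (Matrix.circulant fun i : Fin ℓ => b.coeff i.val)).rank =
      ℓ - (gcd (gcd a b) (X ^ ℓ - 1)).natDegree := by
  rw [Matrix.rank, Stmt8.range_fromColumns,
    ← LinearEquiv.finrank_map_eq (Stmt8.e hℓ), Submodule.map_sup,
    Stmt8.map_range_circ hℓ ha, Stmt8.map_range_circ hℓ hb,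
    ← Stmt8.restrictScalars_sup, Stmt8.span_pair_eq hℓ a b,
    Stmt8.finrank_ideal hℓ (gcd_dvd_right _ _)]
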